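/- The expectation of the shifted potential in the Gaussian ground state satisfies: for φ₀(t) = (√2 π)^{-1/4} e^{-t²/(2√2)}, one has ∫ φ₀(t)² (V(ε,t) - (t²/2 - 1/√2)) dt = -ε/4 + o(ε) as ε → 0⁺, where V(ε,t) = t²/(2(1+εt²)^{1/2}) - 1/(√2 (1+εt²)^{1/4}). -/

import Mathlib

set_option maxHeartbeats 1000000

open MeasureTheory Asymptotics

/-- The Gaussian ground state `φ₀` of `Ĥ₀ = -∂_t² + t²/2 - 1/√2`. -/
noncomputable def phiZero7 (t : ℝ) : ℝ :=
  (Real.sqrt 2 * Real.pi) ^ (-(1 : ℝ) / 4) * Real.exp (-t ^ 2 / (2 * Real.sqrt 2))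

/-- The potential `V(ε,t)` of `Ĥ(ε)`. -/
noncomputable def hHatV7 (ε t : ℝ) : ℝ :=
  t ^ 2 / (2 * (1 + ε * t ^ 2) ^ ((1 : ℝ) / 2))
    - 1 / (Real.sqrt 2 * (1 + ε * t ^ 2) ^ ((1 : ℝ) / 4))

lemma gaussInt7 {b : ℝ} (hb : 0 < b) (n : ℕ) :
    Integrable fun x : ℝ => x ^ n * Real.exp (-b * x ^ 2) := by
  simpa [Real.rpow_natCast] using integrable_rpow_mul_exp_neg_mul_sq hb
    (s := n) (lt_of_lt_of_le (by norm_num) (Nat.cast_nonneg n))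

lemma momentRec7 {b : ℝ} (hb : 0 < b) (k : ℕ) :
    ∫ x : ℝ, x ^ (k + 2) * Real.exp (-b * x ^ 2)
      = ((k + 1 : ℝ) / (2 * b)) * ∫ x : ℝ, x ^ k * Real.exp (-b * x ^ 2) := by
  have hderiv : ∀ x : ℝ, HasDerivAt (fun x : ℝ => x ^ (k + 1) * Real.exp (-b * x ^ 2))
      ((k + 1 : ℝ) * (x ^ k * Real.exp (-b * x ^ 2))
        - (2 * b) * (x ^ (k + 2) * Real.exp (-b * x ^ 2))) x := by
    intro x
    have h1 : HasDerivAt (fun x : ℝ => -b * x ^ 2) (-b * (2 * x)) x := by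
      simpa using (hasDerivAt_pow 2 x).const_mul (-b)
    have h3 := (hasDerivAt_pow (k + 1) x).mul h1.exp
    refine HasDerivAt.congr_deriv h3 ?_
    simp [pow_succ]
    ring
  have hint : Integrable (fun x : ℝ => (k + 1 : ℝ) * (x ^ k * Real.exp (-b * x ^ 2))
      - (2 * b) * (x ^ (k + 2) * Real.exp (-b * x ^ 2))) :=
    ((gaussInt7 hb k).const_mul _).sub ((gaussInt7 hb (k + 2)).const_mul _)
  have h0 := integral_eq_zero_of_hasDerivAt_of_integrable hderiv hint (gaussInt7 hb (k + 1))
  rw [integral_sub ((gaussInt7 hb k).const_mul _) ((gaussInt7 hb (k + 2)).const_mul _),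
    integral_const_mul, integral_const_mul] at h0
  have hb' : (2 * b) ≠ 0 := by positivity
  rw [div_mul_eq_mul_div, eq_div_iff hb']
  linarith [h0]

lemma boundA7 {z : ℝ} (hz : 1 ≤ z) :
    0 ≤ 1 / (2 * z ^ 2) - 1 / 2 + (z ^ 4 - 1) / 4 ∧
      1 / (2 * z ^ 2) - 1 / 2 + (z ^ 4 - 1) / 4 ≤ 3 / 16 * (z ^ 4 - 1) ^ 2 := by
  have hz0 : (0:ℝ) < z := lt_of_lt_of_le one_pos hz
  have heq : 1 / (2 * z ^ 2) - 1 / 2 + (z ^ 4 - 1) / 4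
      = (z ^ 2 - 1) ^ 2 * (z ^ 2 + 2) / (4 * z ^ 2) := by
    field_simp; ring
  constructor
  · rw [heq]; positivity
  · rw [heq, div_le_iff₀ (by positivity)]
    have h1 : 1 ≤ z ^ 2 := by nlinarith
    nlinarith [sq_nonneg (z^2 - 1), sq_nonneg ((z^2-1)*(z^2+1)),
      mul_nonneg (sq_nonneg (z^2-1)) (sub_nonneg.mpr h1)]

lemma boundB7 {z : ℝ} (hz : 1 ≤ z) :
    0 ≤ 1 / z - 1 + (z ^ 4 - 1) / 4 ∧
      1 / z - 1 + (z ^ 4 - 1) / 4 ≤ 5 / 32 * (z ^ 4 - 1) ^ 2 := by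
  have hz0 : (0:ℝ) < z := lt_of_lt_of_le one_pos hz
  have heq : 1 / z - 1 + (z ^ 4 - 1) / 4
      = (z - 1) ^ 2 * (z ^ 3 + 2 * z ^ 2 + 3 * z + 4) / (4 * z) := by
    field_simp; ring
  constructor
  · rw [heq]; positivity
  · rw [heq, div_le_iff₀ (by positivity)]
    have hD : z ^ 3 + 2 * z ^ 2 + 3 * z + 4 ≤ 5 / 8 * z * (z ^ 3 + z ^ 2 + z + 1) ^ 2 := by
      nlinarith [pow_le_pow_right₀ hz (show 2 ≤ 7 by norm_num),
        pow_le_pow_right₀ hz (show 2 ≤ 6 by norm_num),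
        pow_le_pow_right₀ hz (show 2 ≤ 5 by norm_num),
        pow_le_pow_right₀ hz (show 2 ≤ 4 by norm_num),
        pow_le_pow_right₀ hz (show 2 ≤ 3 by norm_num), sq_nonneg (z - 1), hz0.le]
    nlinarith [mul_le_mul_of_nonneg_left hD (sq_nonneg (z - 1))]

lemma keyBound7 {ε : ℝ} (hε : 0 < ε) (t : ℝ) :
    |hHatV7 ε t - (t ^ 2 / 2 - 1 / Real.sqrt 2) + ε * (t ^ 4 / 4 - t ^ 2 / (4 * Real.sqrt 2))|
      ≤ ε ^ 2 * (3 / 16 * t ^ 6 + 5 / (32 * Real.sqrt 2) * t ^ 4) := by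
  have hs2 : (0:ℝ) < Real.sqrt 2 := Real.sqrt_pos.mpr two_pos
  have hbase : (1:ℝ) ≤ 1 + ε * t ^ 2 := by nlinarith [sq_nonneg t]
  set z : ℝ := (1 + ε * t ^ 2) ^ ((1 : ℝ) / 4) with hzdef
  have hz1 : 1 ≤ z :=
    calc (1:ℝ) = 1 ^ ((1:ℝ)/4) := (Real.one_rpow _).symm
    _ ≤ z := Real.rpow_le_rpow zero_le_one hbase (by norm_num)
  have hz0 : (0:ℝ) < z := lt_of_lt_of_le one_pos hz1
  have hz4 : z ^ 4 = 1 + ε * t ^ 2 := by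
    rw [hzdef, ← Real.rpow_natCast ((1 + ε * t ^ 2) ^ ((1:ℝ)/4)) 4,
      ← Real.rpow_mul (by linarith)]
    norm_num
  have hz2 : (1 + ε * t ^ 2) ^ ((1:ℝ) / 2) = z ^ 2 := by
    rw [hzdef, ← Real.rpow_natCast ((1 + ε * t ^ 2) ^ ((1:ℝ)/4)) 2,
      ← Real.rpow_mul (by linarith)]
    norm_num
  have h1 : ε * t ^ 2 = z ^ 4 - 1 := by rw [hz4]; ring
  have hV : hHatV7 ε t = t ^ 2 / (2 * z ^ 2) - 1 / (Real.sqrt 2 * z) := by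
    rw [hHatV7, hz2, hzdef]
  have hA := boundA7 hz1
  have hB := boundB7 hz1
  have hmain : hHatV7 ε t - (t ^ 2 / 2 - 1 / Real.sqrt 2)
        + ε * (t ^ 4 / 4 - t ^ 2 / (4 * Real.sqrt 2))
      = t ^ 2 * (1 / (2 * z ^ 2) - 1 / 2 + (z ^ 4 - 1) / 4)
        - (Real.sqrt 2)⁻¹ * (1 / z - 1 + (z ^ 4 - 1) / 4) := by
    rw [hV]
    linear_combination (t ^ 2 / 4 - 1 / (4 * Real.sqrt 2)) * h1
  have hrhs : ε ^ 2 * (3 / 16 * t ^ 6 + 5 / (32 * Real.sqrt 2) * t ^ 4)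
      = 3 / 16 * (z ^ 4 - 1) ^ 2 * t ^ 2 + (Real.sqrt 2)⁻¹ * (5 / 32 * (z ^ 4 - 1) ^ 2) := by
    have h2 : ε ^ 2 * t ^ 4 = (z ^ 4 - 1) ^ 2 := by rw [← h1]; ring
    linear_combination (3 / 16 * t ^ 2 + 5 / (32 * Real.sqrt 2)) * h2
  rw [hmain, hrhs, abs_le]
  constructor
  · linarith [mul_nonneg (sq_nonneg t) hA.1,
      mul_le_mul_of_nonneg_left hB.2 (inv_nonneg.mpr hs2.le),
      mul_nonneg (mul_nonneg (by norm_num : (0:ℝ) ≤ 3/16) (sq_nonneg (z ^ 4 - 1))) (sq_nonneg t)]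
  · linarith [mul_le_mul_of_nonneg_left hA.2 (sq_nonneg t),
      mul_nonneg (inv_nonneg.mpr hs2.le) hB.1,
      mul_nonneg (inv_nonneg.mpr hs2.le)
        (mul_nonneg (by norm_num : (0:ℝ) ≤ 5/32) (sq_nonneg (z ^ 4 - 1)))]

/-- `⟨φ₀, (V(ε,·) - (t²/2 - 1/√2)) φ₀⟩ = -ε/4 + o(ε)` as `ε → 0⁺`. -/
theorem phiZero_expectation_asymptotics :
    (fun ε : ℝ =>
        (∫ t : ℝ, phiZero7 t ^ 2 * (hHatV7 ε t - (t ^ 2 / 2 - 1 / Real.sqrt 2)))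
          + ε / 4)
      =o[nhdsWithin 0 (Set.Ioi 0)] fun ε : ℝ => ε := by
  have hs2 : (0:ℝ) < Real.sqrt 2 := Real.sqrt_pos.mpr two_pos
  have hs2' : Real.sqrt 2 ≠ 0 := ne_of_gt hs2
  have hss : Real.sqrt 2 * Real.sqrt 2 = 2 := Real.mul_self_sqrt (by norm_num)
  have hpi : (0:ℝ) < Real.pi := Real.pi_pos
  set b : ℝ := (Real.sqrt 2)⁻¹ with hb_def
  have hb : 0 < b := by positivity
  set C0 : ℝ := (Real.sqrt 2 * Real.pi) ^ (-(1:ℝ)/2) with hC0_def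
  have hsp : (0:ℝ) < Real.sqrt 2 * Real.pi := by positivity
  have hphiSq : ∀ t : ℝ, phiZero7 t ^ 2 = C0 * Real.exp (-b * t ^ 2) := by
    intro t
    rw [phiZero7, mul_pow, hC0_def]
    congr 1
    · rw [← Real.rpow_natCast ((Real.sqrt 2 * Real.pi) ^ (-(1:ℝ)/4)) 2,
        ← Real.rpow_mul hsp.le]
      norm_num
    · rw [sq, ← Real.exp_add]
      congr 1
      rw [hb_def]
      field_simp
      ring
  set S : ℝ := Real.sqrt (Real.pi / b) with hS_def
  have hpb : Real.pi / b = Real.sqrt 2 * Real.pi := by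
    rw [hb_def]
    field_simp
  have hnorm : C0 * S = 1 := by
    rw [hS_def, hC0_def, hpb, Real.sqrt_eq_rpow (Real.sqrt 2 * Real.pi), ← Real.rpow_add hsp]
    norm_num
  have hM0 : ∫ t : ℝ, Real.exp (-b * t ^ 2) = S := by
    rw [hS_def]; exact integral_gaussian b
  have hM2 : ∫ t : ℝ, t ^ 2 * Real.exp (-b * t ^ 2) = 1 / (2 * b) * S := by
    have h := momentRec7 hb 0
    simp only [pow_zero, one_mul] at h
    rw [show (0:ℕ) + 2 = 2 from rfl] at h
    rw [h, hM0]; norm_num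
  have hM4 : ∫ t : ℝ, t ^ 4 * Real.exp (-b * t ^ 2) = 3 / (2 * b) * (1 / (2 * b) * S) := by
    have h := momentRec7 hb 2
    rw [show (2:ℕ) + 2 = 4 from rfl] at h
    rw [h, hM2]; norm_num
  have I2 : Integrable fun t : ℝ =>
      phiZero7 t ^ 2 * (t ^ 4 / 4 - t ^ 2 / (4 * Real.sqrt 2)) := by
    have heq : (fun t : ℝ => phiZero7 t ^ 2 * (t ^ 4 / 4 - t ^ 2 / (4 * Real.sqrt 2)))
        = fun t : ℝ => (C0 / 4) * (t ^ 4 * Real.exp (-b * t ^ 2))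
          - (C0 / (4 * Real.sqrt 2)) * (t ^ 2 * Real.exp (-b * t ^ 2)) := by
      funext t; rw [hphiSq t]; ring
    rw [heq]
    exact ((gaussInt7 hb 4).const_mul _).sub ((gaussInt7 hb 2).const_mul _)
  have E2 : ∫ t : ℝ, phiZero7 t ^ 2 * (t ^ 4 / 4 - t ^ 2 / (4 * Real.sqrt 2)) = 1 / 4 := by
    have heq : (fun t : ℝ => phiZero7 t ^ 2 * (t ^ 4 / 4 - t ^ 2 / (4 * Real.sqrt 2)))
        = fun t : ℝ => (C0 / 4) * (t ^ 4 * Real.exp (-b * t ^ 2))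
          - (C0 / (4 * Real.sqrt 2)) * (t ^ 2 * Real.exp (-b * t ^ 2)) := by
      funext t; rw [hphiSq t]; ring
    rw [heq, integral_sub ((gaussInt7 hb 4).const_mul _) ((gaussInt7 hb 2).const_mul _),
      integral_const_mul, integral_const_mul, hM4, hM2, hb_def]
    field_simp
    linear_combination (3*(C0*S)) * hss + 4 * hnorm
  have Imaj : Integrable fun t : ℝ =>
      phiZero7 t ^ 2 * (3 / 16 * t ^ 6 + 5 / (32 * Real.sqrt 2) * t ^ 4) := by
    have heq : (fun t : ℝ => phiZero7 t ^ 2 * (3 / 16 * t ^ 6 + 5 / (32 * Real.sqrt 2) * t ^ 4))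
        = fun t : ℝ => (C0 * (3 / 16)) * (t ^ 6 * Real.exp (-b * t ^ 2))
          + (C0 * (5 / (32 * Real.sqrt 2))) * (t ^ 4 * Real.exp (-b * t ^ 2)) := by
      funext t; rw [hphiSq t]; ring
    rw [heq]
    exact ((gaussInt7 hb 6).const_mul _).add ((gaussInt7 hb 4).const_mul _)
  set C : ℝ := ∫ t : ℝ, phiZero7 t ^ 2 * (3 / 16 * t ^ 6 + 5 / (32 * Real.sqrt 2) * t ^ 4)
    with hC_def
  have hbig : (fun ε : ℝ =>
      (∫ t : ℝ, phiZero7 t ^ 2 * (hHatV7 ε t - (t ^ 2 / 2 - 1 / Real.sqrt 2))) + ε / 4)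
      =O[nhdsWithin 0 (Set.Ioi 0)] fun ε : ℝ => ε ^ 2 := by
    apply Asymptotics.IsBigO.of_bound C
    filter_upwards [self_mem_nhdsWithin] with ε hε
    rw [Set.mem_Ioi] at hε
    have hposb : ∀ t : ℝ, (0:ℝ) < 1 + ε * t ^ 2 := fun t => by nlinarith [sq_nonneg t]
    have hcontb : Continuous fun t : ℝ => 1 + ε * t ^ 2 :=
      continuous_const.add (continuous_const.mul (continuous_pow 2))
    have hcontV : Continuous fun t : ℝ => hHatV7 ε t := by
      unfold hHatV7
      apply Continuous.sub
      · exact (continuous_pow 2).div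
          (continuous_const.mul (hcontb.rpow_const fun t => Or.inr (by norm_num)))
          (fun t => (mul_pos two_pos (Real.rpow_pos_of_pos (hposb t) _)).ne')
      · exact continuous_const.div
          (continuous_const.mul (hcontb.rpow_const fun t => Or.inr (by norm_num)))
          (fun t => (mul_pos hs2 (Real.rpow_pos_of_pos (hposb t) _)).ne')
    have hcont1 : Continuous fun t : ℝ =>
        phiZero7 t ^ 2 * (hHatV7 ε t - (t ^ 2 / 2 - 1 / Real.sqrt 2)) := by
      have hphi : Continuous phiZero7 :=
        continuous_const.mul (Real.continuous_exp.comp ((continuous_pow 2).neg.div_const _))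
      exact (hphi.pow 2).mul
        (hcontV.sub (((continuous_pow 2).div_const 2).sub continuous_const))
    have key : ∀ t : ℝ,
        ‖phiZero7 t ^ 2 * (hHatV7 ε t - (t ^ 2 / 2 - 1 / Real.sqrt 2))
          + ε * (phiZero7 t ^ 2 * (t ^ 4 / 4 - t ^ 2 / (4 * Real.sqrt 2)))‖
        ≤ ε ^ 2 * (phiZero7 t ^ 2 * (3 / 16 * t ^ 6 + 5 / (32 * Real.sqrt 2) * t ^ 4)) := by
      intro t
      have h := keyBound7 hε t
      have hφ : (0:ℝ) ≤ phiZero7 t ^ 2 := sq_nonneg _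
      have heq : phiZero7 t ^ 2 * (hHatV7 ε t - (t ^ 2 / 2 - 1 / Real.sqrt 2))
          + ε * (phiZero7 t ^ 2 * (t ^ 4 / 4 - t ^ 2 / (4 * Real.sqrt 2)))
          = phiZero7 t ^ 2 * (hHatV7 ε t - (t ^ 2 / 2 - 1 / Real.sqrt 2)
            + ε * (t ^ 4 / 4 - t ^ 2 / (4 * Real.sqrt 2))) := by ring
      rw [Real.norm_eq_abs, heq, abs_mul, abs_of_nonneg hφ]
      calc phiZero7 t ^ 2 * |hHatV7 ε t - (t ^ 2 / 2 - 1 / Real.sqrt 2)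
            + ε * (t ^ 4 / 4 - t ^ 2 / (4 * Real.sqrt 2))|
          ≤ phiZero7 t ^ 2 * (ε ^ 2 * (3 / 16 * t ^ 6 + 5 / (32 * Real.sqrt 2) * t ^ 4)) :=
            mul_le_mul_of_nonneg_left h hφ
        _ = ε ^ 2 * (phiZero7 t ^ 2 * (3 / 16 * t ^ 6 + 5 / (32 * Real.sqrt 2) * t ^ 4)) := by
            ring
    have I1 : Integrable fun t : ℝ =>
        phiZero7 t ^ 2 * (hHatV7 ε t - (t ^ 2 / 2 - 1 / Real.sqrt 2)) := by
      apply Integrable.mono'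
        (g := fun t : ℝ =>
          ε ^ 2 * (phiZero7 t ^ 2 * (3 / 16 * t ^ 6 + 5 / (32 * Real.sqrt 2) * t ^ 4))
            + ε * |phiZero7 t ^ 2 * (t ^ 4 / 4 - t ^ 2 / (4 * Real.sqrt 2))|)
        ((Imaj.const_mul _).add ((I2.abs).const_mul _)) hcont1.aestronglyMeasurable
      refine Filter.Eventually.of_forall fun t => ?_
      have h1 := key t
      have heq : phiZero7 t ^ 2 * (hHatV7 ε t - (t ^ 2 / 2 - 1 / Real.sqrt 2))
          = (phiZero7 t ^ 2 * (hHatV7 ε t - (t ^ 2 / 2 - 1 / Real.sqrt 2))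
              + ε * (phiZero7 t ^ 2 * (t ^ 4 / 4 - t ^ 2 / (4 * Real.sqrt 2))))
            - ε * (phiZero7 t ^ 2 * (t ^ 4 / 4 - t ^ 2 / (4 * Real.sqrt 2))) := by ring
      rw [heq]
      refine (norm_sub_le _ _).trans ?_
      have h2 : ‖ε * (phiZero7 t ^ 2 * (t ^ 4 / 4 - t ^ 2 / (4 * Real.sqrt 2)))‖
          = ε * |phiZero7 t ^ 2 * (t ^ 4 / 4 - t ^ 2 / (4 * Real.sqrt 2))| := by
        rw [Real.norm_eq_abs, abs_mul, abs_of_pos hε]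
      rw [h2]
      exact add_le_add h1 le_rfl
    have hval : (∫ t : ℝ, phiZero7 t ^ 2 * (hHatV7 ε t - (t ^ 2 / 2 - 1 / Real.sqrt 2))) + ε / 4
        = ∫ t : ℝ, (phiZero7 t ^ 2 * (hHatV7 ε t - (t ^ 2 / 2 - 1 / Real.sqrt 2))
            + ε * (phiZero7 t ^ 2 * (t ^ 4 / 4 - t ^ 2 / (4 * Real.sqrt 2)))) := by
      rw [integral_add I1 ((I2.const_mul ε).congr ?_), integral_const_mul, E2]
      · ring
      · exact Filter.EventuallyEq.rfl
    rw [hval]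
    calc ‖∫ t : ℝ, (phiZero7 t ^ 2 * (hHatV7 ε t - (t ^ 2 / 2 - 1 / Real.sqrt 2))
            + ε * (phiZero7 t ^ 2 * (t ^ 4 / 4 - t ^ 2 / (4 * Real.sqrt 2))))‖
        ≤ ∫ t : ℝ, ε ^ 2 * (phiZero7 t ^ 2 * (3 / 16 * t ^ 6 + 5 / (32 * Real.sqrt 2) * t ^ 4)) :=
          norm_integral_le_of_norm_le (Imaj.const_mul _) (Filter.Eventually.of_forall key)
      _ = ε ^ 2 * C := by rw [integral_const_mul, hC_def]
      _ ≤ C * ‖ε ^ 2‖ := by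
          rw [Real.norm_eq_abs, abs_of_nonneg (sq_nonneg ε)]
          exact le_of_eq (mul_comm _ _)
  have hsq : (fun ε : ℝ => ε ^ 2) =o[nhdsWithin 0 (Set.Ioi 0)] fun ε : ℝ => ε := by
    have h1 : (fun ε : ℝ => ε) =o[nhdsWithin 0 (Set.Ioi 0)] (fun _ : ℝ => (1:ℝ)) := by
      rw [Asymptotics.isLittleO_one_iff]
      exact Filter.Tendsto.mono_left Filter.tendsto_id nhdsWithin_le_nhds
    have h2 := h1.mul_isBigO (Asymptotics.isBigO_refl (fun ε : ℝ => ε) (nhdsWithin 0 (Set.Ioi 0)))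
    simpa [pow_two] using h2
  exact hbig.trans_isLittleO hsq
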